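/- (Operator Chebyshev inequality.) Let X be a discrete random variable with values in the selfadjoint operators on a d-dimensional complex Hilbert space, with expectation M = 𝔼X and variance S² = 𝔼((X − M)²), and let Δ be a positive definite operator. Then Pr{ |X − M| ≰ Δ } ≤ Tr(S²·Δ⁻²), where |Y| = √(Y*Y) denotes the operator absolute value. -/

import Mathlib

open scoped BigOperators
open ComplexOrder
open scoped Matrix

def IsProbDist {α : Type*} [Fintype α] (P : α → ℝ) : Prop :=
  (∀ a, 0 ≤ P a) ∧ ∑ a, P a = 1

/-- Probability of an event under a finitely supported distribution. -/
noncomputable def prOf {α : Type*} [Fintype α] (p : α → ℝ) (s : Set α) : ℝ :=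
  ∑ a, s.indicator p a

/-- Operator absolute value |Y| = √(YᴴY). -/
noncomputable def opAbs {m : Type*} [Fintype m] [DecidableEq m]
    (A : Matrix m m ℂ) : Matrix m m ℂ :=
  (Matrix.posSemidef_conjTranspose_mul_self A).1.eigenvectorUnitary.1 *
    Matrix.diagonal ((↑) ∘ (√·) ∘ (Matrix.posSemidef_conjTranspose_mul_self A).1.eigenvalues) *
    (star (Matrix.posSemidef_conjTranspose_mul_self A).1.eigenvectorUnitary : Matrix m m ℂ)

set_option linter.unusedSectionVars false

open Matrix

section Helpers

variable {n : Type*} [Fintype n] [DecidableEq n]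

lemma posSemidef_iff_eq_transpose_mul_self' {A : Matrix n n ℂ} :
    A.PosSemidef ↔ ∃ B : Matrix n n ℂ, A = Bᴴ * B := by
  open scoped MatrixOrder in
  exact ⟨fun hA => CStarAlgebra.nonneg_iff_eq_star_mul_self.mp hA.nonneg,
    fun ⟨B, hB⟩ => hB ▸ Matrix.posSemidef_conjTranspose_mul_self B⟩

lemma trace_conjTranspose_mul_self_nonneg (E : Matrix n n ℂ) : 0 ≤ (Eᴴ * E).trace := by
  rw [Matrix.trace]
  refine Finset.sum_nonneg fun i _ => ?_
  rw [Matrix.diag_apply, Matrix.mul_apply]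
  refine Finset.sum_nonneg fun j _ => ?_
  simpa [Matrix.conjTranspose_apply] using star_mul_self_nonneg (E j i)

lemma trace_mul_psd_nonneg {A B : Matrix n n ℂ} (hA : A.PosSemidef) (hB : B.PosSemidef) :
    0 ≤ (A * B).trace := by
  obtain ⟨C, rfl⟩ := posSemidef_iff_eq_transpose_mul_self'.mp hA
  obtain ⟨D, rfl⟩ := posSemidef_iff_eq_transpose_mul_self'.mp hB
  have h : (Cᴴ * C * (Dᴴ * D)).trace = ((C * Dᴴ)ᴴ * (C * Dᴴ)).trace := by
    rw [Matrix.conjTranspose_mul, Matrix.conjTranspose_conjTranspose,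
      show Cᴴ * C * (Dᴴ * D) = Cᴴ * C * Dᴴ * D by simp only [Matrix.mul_assoc],
      Matrix.trace_mul_comm]
    simp only [Matrix.mul_assoc]
  rw [h]
  exact trace_conjTranspose_mul_self_nonneg _

set_option linter.unusedSectionVars false

lemma dot_cs (u w : n → ℂ) :
    Complex.normSq (star u ⬝ᵥ w) ≤ (star u ⬝ᵥ u).re * (star w ⬝ᵥ w).re := by
  let u' : EuclideanSpace ℂ n := (WithLp.equiv 2 (n → ℂ)).symm u
  let w' : EuclideanSpace ℂ n := (WithLp.equiv 2 (n → ℂ)).symm w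
  have hinner : ∀ a b : EuclideanSpace ℂ n,
      (inner ℂ a b : ℂ) = star ((WithLp.equiv 2 (n → ℂ)) a) ⬝ᵥ ((WithLp.equiv 2 (n → ℂ)) b) := by
    intro a b
    rw [PiLp.inner_apply, dotProduct]
    simp [RCLike.inner_apply, mul_comm]
  have h := norm_inner_le_norm (𝕜 := ℂ) u' w'
  have h2 : ‖(inner ℂ u' w' : ℂ)‖ ^ 2 ≤ ‖u'‖ ^ 2 * ‖w'‖ ^ 2 := by
    rw [← mul_pow]
    exact pow_le_pow_left₀ (norm_nonneg _) h 2
  rw [← inner_self_eq_norm_sq (𝕜 := ℂ) u', ← inner_self_eq_norm_sq (𝕜 := ℂ) w'] at h2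
  simp only [hinner] at h2
  simpa [Complex.normSq_eq_norm_sq, u', w'] using h2

lemma quadform_conjTranspose_mul (B : Matrix n n ℂ) (a b : n → ℂ) :
    star a ⬝ᵥ (Bᴴ * B) *ᵥ b = star (B *ᵥ a) ⬝ᵥ (B *ᵥ b) := by
  rw [← Matrix.mulVec_mulVec, Matrix.dotProduct_mulVec, Matrix.vecMul_conjTranspose, star_star]

lemma psd_cs {R : Matrix n n ℂ} (hR : R.PosSemidef) (a b : n → ℂ) :
    Complex.normSq (star a ⬝ᵥ R *ᵥ b) ≤ (star a ⬝ᵥ R *ᵥ a).re * (star b ⬝ᵥ R *ᵥ b).re := by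
  obtain ⟨B, rfl⟩ := posSemidef_iff_eq_transpose_mul_self'.mp hR
  rw [quadform_conjTranspose_mul, quadform_conjTranspose_mul, quadform_conjTranspose_mul]
  exact dot_cs _ _

lemma trace_mul_vecMulVec (Q : Matrix n n ℂ) (v : n → ℂ) :
    (Q * vecMulVec v (star v)).trace = star v ⬝ᵥ Q *ᵥ v := by
  simp only [Matrix.trace, Matrix.diag_apply, Matrix.mul_apply, Matrix.vecMulVec_apply,
    dotProduct, Matrix.mulVec, Pi.star_apply, Finset.mul_sum]
  exact Finset.sum_congr rfl fun i _ => Finset.sum_congr rfl fun j _ => by ring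

lemma vecMulVec_star_hermitian (v : n → ℂ) : (vecMulVec v (star v)).IsHermitian := by
  ext i j
  simp only [Matrix.conjTranspose_apply, Matrix.vecMulVec_apply, Pi.star_apply, star_mul']
  ring_nf
  simp [mul_comm]

lemma star_dot_swap (x v : n → ℂ) : star x ⬝ᵥ v = starRingEnd ℂ (star v ⬝ᵥ x) := by
  simp only [dotProduct, map_sum, Pi.star_apply]
  exact Finset.sum_congr rfl fun k _ => by simp [mul_comm]

lemma key_trace {Q R : Matrix n n ℂ} (hQ : Q.PosSemidef) (hR : R.PosDef) {v : n → ℂ}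
    (hv : v ≠ 0) (hlt : (star v ⬝ᵥ R *ᵥ v).re < (star v ⬝ᵥ Q *ᵥ v).re) :
    1 ≤ (Q * R⁻¹).trace.re := by
  set c : ℝ := (star v ⬝ᵥ R *ᵥ v).re with hc
  have hc0 : 0 < c := hR.re_dotProduct_pos hv
  have hRinv : R⁻¹.PosDef := hR.inv
  have hRR : R * R⁻¹ = 1 :=
    Matrix.mul_nonsing_inv R ((Matrix.isUnit_iff_isUnit_det R).mp hR.isUnit)
  set K : Matrix n n ℂ := R⁻¹ - ((c : ℂ))⁻¹ • vecMulVec v (star v) with hKdef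
  have hKpsd : K.PosSemidef := by
    rw [Matrix.posSemidef_iff_dotProduct_mulVec]
    constructor
    · refine hRinv.isHermitian.sub ?_
      rw [Matrix.IsHermitian, Matrix.conjTranspose_smul, (vecMulVec_star_hermitian v).eq]
      congr 1
      rw [← Complex.ofReal_inv]
      exact Complex.conj_ofReal _
    · intro x
      have hxv : (vecMulVec v (star v)) *ᵥ x = (star v ⬝ᵥ x) • v := by
        ext i
        simp only [Matrix.mulVec, Matrix.vecMulVec_apply, dotProduct, Pi.smul_apply,
          smul_eq_mul, Finset.sum_mul, Pi.star_apply]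
        exact Finset.sum_congr rfl fun k _ => by ring
      have hform : star x ⬝ᵥ K *ᵥ x
          = star x ⬝ᵥ R⁻¹ *ᵥ x - ((c⁻¹ * Complex.normSq (star v ⬝ᵥ x) : ℝ) : ℂ) := by
        rw [hKdef, Matrix.sub_mulVec, dotProduct_sub, Matrix.smul_mulVec, hxv]
        congr 1
        rw [dotProduct_smul, dotProduct_smul, star_dot_swap x v,
          smul_eq_mul, smul_eq_mul, Complex.mul_conj]
        push_cast
        ring
      have hA : 0 ≤ star x ⬝ᵥ R⁻¹ *ᵥ x := hRinv.posSemidef.dotProduct_mulVec_nonneg x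
      have hcs : Complex.normSq (star v ⬝ᵥ x) ≤ c * (star x ⬝ᵥ R⁻¹ *ᵥ x).re := by
        have hx' : star v ⬝ᵥ x = star v ⬝ᵥ R *ᵥ (R⁻¹ *ᵥ x) := by
          rw [Matrix.mulVec_mulVec, hRR, Matrix.one_mulVec]
        have hu : star (R⁻¹ *ᵥ x) ⬝ᵥ R *ᵥ (R⁻¹ *ᵥ x) = star x ⬝ᵥ R⁻¹ *ᵥ x := by
          rw [Matrix.mulVec_mulVec, hRR, Matrix.one_mulVec, Matrix.star_mulVec,
            hRinv.isHermitian.eq, ← Matrix.dotProduct_mulVec]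
        calc Complex.normSq (star v ⬝ᵥ x)
            = Complex.normSq (star v ⬝ᵥ R *ᵥ (R⁻¹ *ᵥ x)) := by rw [← hx']
          _ ≤ (star v ⬝ᵥ R *ᵥ v).re * (star (R⁻¹ *ᵥ x) ⬝ᵥ R *ᵥ (R⁻¹ *ᵥ x)).re :=
              psd_cs hR.posSemidef _ _
          _ = c * (star x ⬝ᵥ R⁻¹ *ᵥ x).re := by rw [hu]
      have hA2 := Complex.le_def.mp hA
      simp only [Complex.zero_re, Complex.zero_im] at hA2
      rw [hform, Complex.le_def]
      constructor
      · simp only [Complex.sub_re, Complex.ofReal_re, Complex.zero_re]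
        have h1 : c⁻¹ * Complex.normSq (star v ⬝ᵥ x) ≤ (star x ⬝ᵥ R⁻¹ *ᵥ x).re := by
          rw [inv_mul_le_iff₀ hc0]
          linarith
        linarith
      · simp only [Complex.sub_im, Complex.ofReal_im, Complex.zero_im]
        linarith [hA2.2]
  -- now combine
  have hsplit : Q * R⁻¹ = Q * K + ((c : ℂ))⁻¹ • (Q * vecMulVec v (star v)) := by
    rw [hKdef, Matrix.mul_sub, Matrix.mul_smul]
    abel
  have htr : (Q * R⁻¹).trace = (Q * K).trace + ((c : ℂ))⁻¹ * (star v ⬝ᵥ Q *ᵥ v) := by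
    rw [hsplit, Matrix.trace_add, Matrix.trace_smul, trace_mul_vecMulVec, smul_eq_mul]
  have hQK : 0 ≤ (Q * K).trace := trace_mul_psd_nonneg hQ hKpsd
  have hQK' := (Complex.le_def.mp hQK).1
  simp only [Complex.zero_re] at hQK'
  have hre : (Q * R⁻¹).trace.re
      = (Q * K).trace.re + c⁻¹ * (star v ⬝ᵥ Q *ᵥ v).re := by
    rw [htr, Complex.add_re, ← Complex.ofReal_inv]
    simp [Complex.mul_re]
  rw [hre]
  have h2 : 1 ≤ c⁻¹ * (star v ⬝ᵥ Q *ᵥ v).re := by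
    rw [← inv_mul_cancel₀ (ne_of_gt hc0)]
    have := (inv_pos.mpr hc0).le
    nlinarith
  linarith

lemma posSemidef_sub_of_sq {P D : Matrix n n ℂ} (hP : P.PosSemidef) (hD : D.PosSemidef)
    (h : (D * D - P * P).PosSemidef) : (D - P).PosSemidef := by
  have hC : (D - P).IsHermitian := hD.isHermitian.sub hP.isHermitian
  apply hC.posSemidef_iff_eigenvalues_nonneg.mpr
  intro i
  by_contra hneg
  push_neg at hneg
  rw [Pi.zero_apply] at hneg
  set lam : ℝ := hC.eigenvalues i with hlam
  set v : n → ℂ := ⇑(hC.eigenvectorBasis i) with hvdef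
  have hv0 : v ≠ 0 := by
    have := hC.eigenvectorBasis.orthonormal.ne_zero i
    intro hcon
    apply this
    ext j
    exact congrFun hcon j
  have heig : (D - P) *ᵥ v = (lam : ℂ) • v := by
    have h1 := hC.mulVec_eigenvectorBasis i
    rw [hvdef]
    convert h1 using 1
    exact RCLike.real_smul_eq_coe_smul (K := ℂ) _ _ |>.symm
  have hsv : star v ᵥ* (D - P) = (lam : ℂ) • star v := by
    have h2 : star ((D - P) *ᵥ v) = star v ᵥ* (D - P)ᴴ := Matrix.star_mulVec _ _
    rw [heig, hC.eq] at h2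
    rw [← h2, star_smul]
    congr 1
    simp
  have hsplit : D * D - P * P = D * (D - P) + (D - P) * P := by
    rw [Matrix.mul_sub, Matrix.sub_mul]
    abel
  have hkey : star v ⬝ᵥ (D * D - P * P) *ᵥ v = (lam : ℂ) * (star v ⬝ᵥ (D + P) *ᵥ v) := by
    have t1 : star v ⬝ᵥ (D * (D - P)) *ᵥ v = (lam : ℂ) * (star v ⬝ᵥ D *ᵥ v) := by
      rw [← Matrix.mulVec_mulVec, heig, Matrix.mulVec_smul, dotProduct_smul, smul_eq_mul]
    have t2 : star v ⬝ᵥ ((D - P) * P) *ᵥ v = (lam : ℂ) * (star v ⬝ᵥ P *ᵥ v) := by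
      rw [← Matrix.mulVec_mulVec, Matrix.dotProduct_mulVec, hsv, smul_dotProduct,
        smul_eq_mul]
    rw [hsplit, Matrix.add_mulVec, dotProduct_add, t1, t2, Matrix.add_mulVec,
      dotProduct_add]
    ring
  have h0 : 0 ≤ (lam : ℂ) * (star v ⬝ᵥ (D + P) *ᵥ v) := hkey ▸ h.dotProduct_mulVec_nonneg v
  have ha : 0 ≤ star v ⬝ᵥ (D + P) *ᵥ v := (hD.add hP).dotProduct_mulVec_nonneg v
  set a : ℂ := star v ⬝ᵥ (D + P) *ᵥ v with hadef
  have haim : a.im = 0 := by simpa using ((Complex.le_def.mp ha).2).symm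
  have hare : 0 ≤ a.re := by simpa using (Complex.le_def.mp ha).1
  have h0re : 0 ≤ ((lam : ℂ) * a).re := by simpa using (Complex.le_def.mp h0).1
  have hmul : ((lam : ℂ) * a).re = lam * a.re := by simp [Complex.mul_re, haim]
  have hare0 : a.re = 0 := by nlinarith [hmul ▸ h0re]
  have ha0 : a = 0 := Complex.ext hare0 haim
  have hd := hD.dotProduct_mulVec_nonneg v
  have hp := hP.dotProduct_mulVec_nonneg v
  have hdim : (star v ⬝ᵥ D *ᵥ v).im = 0 := by simpa using ((Complex.le_def.mp hd).2).symm
  have hpim : (star v ⬝ᵥ P *ᵥ v).im = 0 := by simpa using ((Complex.le_def.mp hp).2).symm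
  have hdre : 0 ≤ (star v ⬝ᵥ D *ᵥ v).re := by simpa using (Complex.le_def.mp hd).1
  have hpre : 0 ≤ (star v ⬝ᵥ P *ᵥ v).re := by simpa using (Complex.le_def.mp hp).1
  have hsum : star v ⬝ᵥ D *ᵥ v + star v ⬝ᵥ P *ᵥ v = 0 := by
    rw [← dotProduct_add, ← Matrix.add_mulVec]
    exact ha0
  have hsumre : (star v ⬝ᵥ D *ᵥ v).re + (star v ⬝ᵥ P *ᵥ v).re = 0 := by
    have := congrArg Complex.re hsum
    simpa using this
  have hD0 : D *ᵥ v = 0 := (hD.dotProduct_mulVec_zero_iff v).1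
    (Complex.ext (by simp only [Complex.zero_re]; linarith) (by simp only [Complex.zero_im]; exact hdim))
  have hP0 : P *ᵥ v = 0 := (hP.dotProduct_mulVec_zero_iff v).1
    (Complex.ext (by simp only [Complex.zero_re]; linarith) (by simp only [Complex.zero_im]; exact hpim))
  have hzero : (lam : ℂ) • v = 0 := by
    rw [← heig, Matrix.sub_mulVec, hD0, hP0, sub_zero]
  rcases smul_eq_zero.mp hzero with hl | hl
  · exact absurd (Complex.ofReal_eq_zero.mp hl) (ne_of_lt hneg)
  · exact hv0 hl

lemma herm_form_im {A : Matrix n n ℂ} (hA : A.IsHermitian) (x : n → ℂ) :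
    (star x ⬝ᵥ A *ᵥ x).im = 0 := by
  have h : star (star x ⬝ᵥ A *ᵥ x) = star x ⬝ᵥ A *ᵥ x := by
    conv_lhs => rw [Matrix.star_dotProduct, star_star, Matrix.star_mulVec, hA.eq,
      ← Matrix.dotProduct_mulVec]
  exact Complex.conj_eq_iff_im.mp h

end Helpers

theorem stmt11 {d : ℕ} {Ω : Type*} [Fintype Ω] (p : Ω → ℝ) (hp : IsProbDist p)
    (Xv : Ω → Matrix (Fin d) (Fin d) ℂ) (hX : ∀ ω, (Xv ω).IsHermitian)
    (M : Matrix (Fin d) (Fin d) ℂ) (hM : M = ∑ ω, (p ω : ℂ) • Xv ω)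
    (S2 : Matrix (Fin d) (Fin d) ℂ)
    (hS2 : S2 = ∑ ω, (p ω : ℂ) • ((Xv ω - M) * (Xv ω - M)))
    (Δ : Matrix (Fin d) (Fin d) ℂ) (hΔ : Δ.PosDef) :
    prOf p {ω | ¬ (Δ - opAbs (Xv ω - M)).PosSemidef} ≤ (S2 * (Δ^2)⁻¹).trace.re := by
  obtain ⟨hp0, hp1⟩ := hp
  have hMH : M.IsHermitian := by
    rw [hM, Matrix.IsHermitian, Matrix.conjTranspose_sum]
    refine Finset.sum_congr rfl fun ω _ => ?_
    rw [Matrix.conjTranspose_smul, (hX ω).eq]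
    congr 1
    exact Complex.conj_ofReal _
  have hΔH := hΔ.isHermitian
  have hR : (Δ ^ 2).PosDef := by
    have hRalt : Δ ^ 2 = Δᴴ * Δ := by rw [pow_two, hΔH.eq]
    rw [Matrix.posDef_iff_dotProduct_mulVec]
    constructor
    · exact hΔH.pow 2
    · intro x hx
      rw [hRalt, quadform_conjTranspose_mul]
      have hinj := Matrix.mulVec_injective_iff_isUnit.mpr hΔ.isUnit
      refine Matrix.dotProduct_star_self_pos_iff.mpr fun h0 => hx (hinj ?_)
      rw [h0, Matrix.mulVec_zero]
  have hYH : ∀ ω, (Xv ω - M).IsHermitian := fun ω => (hX ω).sub hMH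
  have hQpsd : ∀ ω, ((Xv ω - M) * (Xv ω - M)).PosSemidef := fun ω => by
    have h := Matrix.posSemidef_conjTranspose_mul_self (Xv ω - M)
    rwa [(hYH ω).eq] at h
  have hineq : ∀ ω, ¬ (Δ - opAbs (Xv ω - M)).PosSemidef →
      1 ≤ (((Xv ω - M) * (Xv ω - M)) * (Δ ^ 2)⁻¹).trace.re := by
    intro ω hω
    set Y := Xv ω - M with hYdef
    set P := opAbs Y with hPdef
    have hPpsd : P.PosSemidef := by
      rw [hPdef, opAbs]
      exact (Matrix.PosSemidef.diagonal
        (fun i => Complex.zero_le_real.mpr (Real.sqrt_nonneg _))).mul_mul_conjTranspose_same _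
    have hPP : P * P = Y * Y := by
      have key : P * P = Yᴴ * Y := by
        rw [hPdef, opAbs]
        conv_rhs => rw [(Matrix.posSemidef_conjTranspose_mul_self Y).1.spectral_theorem,
          Unitary.conjStarAlgAut_apply]
        simp only [Matrix.mul_assoc]
        rw [← Matrix.mul_assoc (star _), Unitary.coe_star_mul_self, Matrix.one_mul,
          ← Matrix.mul_assoc (Matrix.diagonal _), Matrix.diagonal_mul_diagonal]
        congr 3 with i
        simp only [Function.comp_apply, ← Complex.ofReal_mul,
          Real.mul_self_sqrt ((Matrix.posSemidef_conjTranspose_mul_self Y).eigenvalues_nonneg i)]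
        rfl
      rw [key, (hYH ω).eq]
    have hnot2 : ¬ (Δ * Δ - P * P).PosSemidef := fun hc =>
      hω (posSemidef_sub_of_sq hPpsd hΔ.posSemidef hc)
    have hherm : (Δ * Δ - P * P).IsHermitian := by
      refine Matrix.IsHermitian.sub ?_ ?_
      · rw [show Δ * Δ = Δ ^ 2 from (pow_two Δ).symm]
        exact hΔH.pow 2
      · rw [show P * P = P ^ 2 from (pow_two P).symm]
        exact hPpsd.isHermitian.pow 2
    rw [Matrix.posSemidef_iff_dotProduct_mulVec, not_and] at hnot2
    obtain ⟨v, hv⟩ := not_forall.mp (hnot2 hherm)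
    have him : (star v ⬝ᵥ (Δ * Δ - P * P) *ᵥ v).im = 0 := herm_form_im hherm v
    have hlt' : (star v ⬝ᵥ (Δ * Δ - P * P) *ᵥ v).re < 0 := by
      by_contra hge
      push_neg at hge
      exact hv (Complex.le_def.mpr ⟨by simpa using hge, by simpa using him.symm⟩)
    have hv0 : v ≠ 0 := by
      rintro rfl
      simp at hlt'
    clear hv
    have hlt2 : (star v ⬝ᵥ (Δ ^ 2) *ᵥ v).re < (star v ⬝ᵥ (Y * Y) *ᵥ v).re := by
      rw [Matrix.sub_mulVec, dotProduct_sub, hPP] at hlt'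
      rw [pow_two]
      simp only [Complex.sub_re] at hlt'
      linarith
    exact key_trace (hQpsd ω) hR hv0 hlt2
  have htnn : ∀ ω, 0 ≤ (((Xv ω - M) * (Xv ω - M)) * (Δ ^ 2)⁻¹).trace.re := by
    intro ω
    have := trace_mul_psd_nonneg (hQpsd ω) hR.inv.posSemidef
    simpa using (Complex.le_def.mp this).1
  have hsum : (S2 * (Δ ^ 2)⁻¹).trace.re
      = ∑ ω, p ω * (((Xv ω - M) * (Xv ω - M)) * (Δ ^ 2)⁻¹).trace.re := by
    rw [hS2, Finset.sum_mul]
    simp only [Matrix.smul_mul]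
    rw [Matrix.trace_sum, Complex.re_sum]
    refine Finset.sum_congr rfl fun ω _ => ?_
    rw [Matrix.trace_smul]
    simp [Complex.mul_re]
  rw [prOf, hsum]
  refine Finset.sum_le_sum fun ω _ => ?_
  by_cases hω : ω ∈ {ω | ¬ (Δ - opAbs (Xv ω - M)).PosSemidef}
  · rw [Set.indicator_of_mem hω]
    exact le_mul_of_one_le_right (hp0 ω) (hineq ω hω)
  · rw [Set.indicator_of_notMem hω]
    exact mul_nonneg (hp0 ω) (htnn ω)
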